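/- For every k, l ∈ {1,…,6}, the number of permutations σ ∈ S_5 with (τ₁(σ), τ₂(σ)) = (π^[k], π^[l]) equals the (k,l) entry of the 6×6 matrix with rows (2,1,1,3,3,0), (1,0,1,6,1,1), (1,1,0,1,6,1), (3,1,6,14,4,7), (3,6,1,4,14,7), (0,1,1,7,7,4). Equivalently, under the uniform distribution on S_5, P(τ₁ = π^[k], τ₂ = π^[l]) equals 1/120 times that entry. -/

import Mathlib

open Equiv

/-- The transcript of an ordered pair of permutations: `τ(π₁,π₂) = π₁⁻¹ ∘ π₂`. -/
def transcript {m : ℕ} (π₁ π₂ : Perm (Fin m)) : Perm (Fin m) := π₁⁻¹ * π₂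

/-- The ordinal pattern of a triple `y` with pairwise distinct entries: the unique
permutation `π ∈ S_3` with `y (π 0) < y (π 1) < y (π 2)`. -/
noncomputable def opattern {α : Type*} [LinearOrder α] (y : Fin 3 → α) : Perm (Fin 3) :=
  if h : ∃ π : Perm (Fin 3), y (π 0) < y (π 1) ∧ y (π 1) < y (π 2) then h.choose else 1

/-- For `σ ∈ S_N`, viewed as the tuple `(σ 0, …, σ (N-1))`, the ordinal pattern of
the window `(σ t, σ (t+1), σ (t+2))` (0-based `t`). -/
noncomputable def patN {N : ℕ} (σ : Perm (Fin N)) (t : ℕ) (h : t + 2 < N) : Perm (Fin 3) :=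
  opattern fun i : Fin 3 => σ ⟨t + i, by have := i.isLt; omega⟩

/-- The lag-1 transcript of the ordinal patterns at (0-based) windows `t` and `t+1`;
this is `τ_{t+1}` in the 1-based numbering of the paper. -/
noncomputable def tauN {N : ℕ} (σ : Perm (Fin N)) (t : ℕ) (h : t + 3 < N) : Perm (Fin 3) :=
  transcript (patN σ t (by omega)) (patN σ (t + 1) (by omega))

/-- `π^[1] = (1,2,3)`, the identity. -/
def p1 : Perm (Fin 3) := 1
/-- `π^[2] = (1,3,2)`. -/
def p2 : Perm (Fin 3) := Equiv.swap 1 2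
/-- `π^[3] = (2,1,3)`. -/
def p3 : Perm (Fin 3) := Equiv.swap 0 1
/-- `π^[4] = (2,3,1)`, i.e. `0 ↦ 1 ↦ 2 ↦ 0`. -/
def p4 : Perm (Fin 3) := Equiv.swap 0 1 * Equiv.swap 1 2
/-- `π^[5] = (3,1,2)`, i.e. `0 ↦ 2 ↦ 1 ↦ 0`. -/
def p5 : Perm (Fin 3) := Equiv.swap 1 2 * Equiv.swap 0 1
/-- `π^[6] = (3,2,1)`. -/
def p6 : Perm (Fin 3) := Equiv.swap 0 2

/-- The labelling `k ↦ π^[k+1]` of the six elements of `S_3`. -/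
def lab : Fin 6 → Perm (Fin 3) := ![p1, p2, p3, p4, p5, p6]

/-- The lag-1 bivariate transcript counts over `S_5`. -/
def M10 : Matrix (Fin 6) (Fin 6) ℕ :=
  !![2, 1, 1, 3, 3, 0;
     1, 0, 1, 6, 1, 1;
     1, 1, 0, 1, 6, 1;
     3, 1, 6, 14, 4, 7;
     3, 6, 1, 4, 14, 7;
     0, 1, 1, 7, 7, 4]

section Aux
open Equiv Function

variable {α : Type*} [LinearOrder α]

lemma fin3_cases (i : Fin 3) : i = 0 ∨ i = 1 ∨ i = 2 := by omega

lemma pat_unique {y : Fin 3 → α} (hy : Injective y) (π ρ : Perm (Fin 3))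
    (h1 : y (π 0) < y (π 1)) (h2 : y (π 1) < y (π 2))
    (g1 : y (ρ 0) < y (ρ 1)) (g2 : y (ρ 1) < y (ρ 2)) : π = ρ := by
  have cover : ∀ (θ : Perm (Fin 3)) (j : Fin 3), j = θ 0 ∨ j = θ 1 ∨ j = θ 2 := by
    intro θ j
    obtain ⟨i, hi⟩ := θ.surjective j
    rcases fin3_cases i with h | h | h <;> subst h <;> [left; (right; left); (right; right)] <;>
      exact hi.symm
  have hmin : ∀ (θ : Perm (Fin 3)) (j : Fin 3),
      y (θ 0) < y (θ 1) → y (θ 1) < y (θ 2) → y (θ 0) ≤ y j := by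
    intro θ j a b
    rcases cover θ j with h | h | h <;> subst h
    · exact le_refl _
    · exact a.le
    · exact (a.trans b).le
  have hmax : ∀ (θ : Perm (Fin 3)) (j : Fin 3),
      y (θ 0) < y (θ 1) → y (θ 1) < y (θ 2) → y j ≤ y (θ 2) := by
    intro θ j a b
    rcases cover θ j with h | h | h <;> subst h
    · exact (a.trans b).le
    · exact b.le
    · exact le_refl _
  have e0 : π 0 = ρ 0 :=
    hy (le_antisymm (hmin π (ρ 0) h1 h2) (hmin ρ (π 0) g1 g2))
  have e2 : π 2 = ρ 2 :=
    hy (le_antisymm (hmax ρ (π 2) g1 g2) (hmax π (ρ 2) h1 h2))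
  have e1 : π 1 = ρ 1 := by
    rcases cover π (ρ 1) with h | h | h
    · exact absurd (ρ.injective (h.trans e0)) (by decide)
    · exact h.symm
    · exact absurd (ρ.injective (h.trans e2)) (by decide)
  apply Equiv.ext
  intro i
  rcases fin3_cases i with h | h | h <;> subst h <;> assumption

lemma opattern_eq {y : Fin 3 → α} (hy : Injective y) (π : Perm (Fin 3))
    (h1 : y (π 0) < y (π 1)) (h2 : y (π 1) < y (π 2)) : opattern y = π := by
  have hex : ∃ π : Perm (Fin 3), y (π 0) < y (π 1) ∧ y (π 1) < y (π 2) := ⟨π, h1, h2⟩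
  rw [opattern, dif_pos hex]
  exact pat_unique hy _ _ hex.choose_spec.1 hex.choose_spec.2 h1 h2

/-- A computable version of `opattern`. -/
def cpat (y : Fin 3 → α) : Perm (Fin 3) :=
  if y 0 < y 1 then
    if y 1 < y 2 then p1
    else if y 0 < y 2 then p2 else p5
  else
    if y 0 < y 2 then p3
    else if y 1 < y 2 then p4 else p6

lemma p1_apply : ∀ i, p1 i = ![0,1,2] i := by decide
lemma p2_apply : ∀ i, p2 i = ![0,2,1] i := by decide
lemma p3_apply : ∀ i, p3 i = ![1,0,2] i := by decide
lemma p4_apply : ∀ i, p4 i = ![1,2,0] i := by decide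
lemma p5_apply : ∀ i, p5 i = ![2,0,1] i := by decide
lemma p6_apply : ∀ i, p6 i = ![2,1,0] i := by decide

lemma opattern_eq_cpat {y : Fin 3 → α} (hy : Injective y) : opattern y = cpat y := by
  have ne01 : y 0 ≠ y 1 := fun h => by simpa using hy h
  have ne02 : y 0 ≠ y 2 := fun h => by simpa using hy h
  have ne12 : y 1 ≠ y 2 := fun h => by simpa using hy h
  unfold cpat
  by_cases h01 : y 0 < y 1
  · by_cases h12 : y 1 < y 2
    · rw [if_pos h01, if_pos h12]
      exact opattern_eq hy p1 h01 h12
    · have h21 : y 2 < y 1 := lt_of_le_of_ne (not_lt.1 h12) ne12.symm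
      by_cases h02 : y 0 < y 2
      · rw [if_pos h01, if_neg h12, if_pos h02]
        exact opattern_eq hy p2 h02 h21
      · have h20 : y 2 < y 0 := lt_of_le_of_ne (not_lt.1 h02) ne02.symm
        rw [if_pos h01, if_neg h12, if_neg h02]
        exact opattern_eq hy p5 h20 h01
  · have h10 : y 1 < y 0 := lt_of_le_of_ne (not_lt.1 h01) ne01.symm
    by_cases h02 : y 0 < y 2
    · rw [if_neg h01, if_pos h02]
      exact opattern_eq hy p3 h10 h02
    · have h20 : y 2 < y 0 := lt_of_le_of_ne (not_lt.1 h02) ne02.symm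
      by_cases h12 : y 1 < y 2
      · rw [if_neg h01, if_neg h02, if_pos h12]
        exact opattern_eq hy p4 h12 h20
      · have h21 : y 2 < y 1 := lt_of_le_of_ne (not_lt.1 h12) ne12.symm
        rw [if_neg h01, if_neg h02, if_neg h12]
        exact opattern_eq hy p6 h21 h10

/-- Computable window pattern. -/
def cpatN {N : ℕ} (σ : Perm (Fin N)) (t : ℕ) (h : t + 2 < N) : Perm (Fin 3) :=
  cpat fun i : Fin 3 => σ ⟨t + i, by have := i.isLt; omega⟩

lemma patN_eq {N : ℕ} (σ : Perm (Fin N)) (t : ℕ) (h : t + 2 < N) :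
    patN σ t h = cpatN σ t h := by
  apply opattern_eq_cpat
  intro i j hij
  have := σ.injective hij
  have : t + (i : ℕ) = t + (j : ℕ) := by exact_mod_cast congrArg Fin.val this
  omega

end Aux

/-- For all `k, l`, the number of `σ ∈ S_5` with `(τ₁(σ), τ₂(σ)) = (π^[k], π^[l])`
is the `(k,l)` entry of `M10`; equivalently, under the uniform distribution on
`S_5`, `P(τ₁ = π^[k], τ₂ = π^[l]) = M10 k l / 120`. -/
theorem transcript_biv1_iid : ∀ k l : Fin 6,
    Nat.card {σ : Perm (Fin 5) //
        tauN σ 0 (by omega) = lab k ∧ tauN σ 1 (by omega) = lab l} = M10 k l ∧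
    (Nat.card {σ : Perm (Fin 5) //
        tauN σ 0 (by omega) = lab k ∧ tauN σ 1 (by omega) = lab l} : ℚ) / 120 =
      (1/120 : ℚ) * (M10 k l : ℚ) := by
  have key : ∀ (σ : Perm (Fin 5)) (k l : Fin 6),
      ((tauN σ 0 (by omega) = lab k ∧ tauN σ 1 (by omega) = lab l) ↔
       (cpatN σ 1 (by omega) = cpatN σ 0 (by omega) * lab k ∧
        cpatN σ 2 (by omega) = cpatN σ 1 (by omega) * lab l)) := by
    intro σ k l
    rw [tauN, tauN, transcript, transcript, patN_eq, patN_eq, patN_eq,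
      inv_mul_eq_iff_eq_mul, inv_mul_eq_iff_eq_mul]
  intro k l
  have hcard : Nat.card {σ : Perm (Fin 5) //
        tauN σ 0 (by omega) = lab k ∧ tauN σ 1 (by omega) = lab l} = M10 k l := by
    rw [Nat.card_congr (Equiv.subtypeEquivRight (fun σ => key σ k l)),
      Nat.card_eq_fintype_card]
    revert k l
    exact @of_decide_eq_true _ (@Nat.decidableForallFin _ _ fun _ =>
      @Nat.decidableForallFin _ _ fun _ => instDecidableEqNat _ _) rfl
  refine ⟨hcard, ?_⟩
  rw [hcard]
  ring
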